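/- Let F be a free Lie algebra over a field, with universal Lie pairing h: F × F → F⊗F. Then the map F² → F∧F determined by [x,y] ↦ x∧y is a Lie algebra isomorphism; equivalently, the induced homomorphism κ': F∧F → F², x∧y ↦ [x,y], is an isomorphism. -/

import Mathlib

universe u v w x

/-- A Lie pairing `ρ : L × L → H` of Lie algebras over a field `F`:
a bilinear map satisfying the three Lie-pairing relations. -/
structure IsLiePairing (F : Type u) [Field F] {L : Type v} {H : Type w}
    [LieRing L] [LieAlgebra F L] [LieRing H] [LieAlgebra F H]
    (ρ : L → L → H) : Prop where
  add_left : ∀ l l' k : L, ρ (l + l') k = ρ l k + ρ l' k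
  add_right : ∀ l k k' : L, ρ l (k + k') = ρ l k + ρ l k'
  smul_left : ∀ (c : F) (l k : L), ρ (c • l) k = c • ρ l k
  smul_right : ∀ (c : F) (l k : L), ρ l (c • k) = c • ρ l k
  bracket_left : ∀ l l' s : L, ρ ⁅l, l'⁆ s = ρ l ⁅l', s⁆ - ρ l' ⁅l, s⁆
  bracket_right : ∀ l s s' : L, ρ l ⁅s, s'⁆ = ρ ⁅s', l⁆ s - ρ ⁅s, l⁆ s'
  bracket_bracket : ∀ l s l' s' : L, ρ ⁅l, s⁆ ⁅l', s'⁆ = -⁅ρ s l, ρ l' s'⁆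

/-- `h : L × L → T` is a universal Lie pairing: `T` plays the role of the
nonabelian tensor square `L ⊗ L`, with `h l l' = l ⊗ l'`. -/
structure IsUniversalLiePairing (F : Type u) [Field F] (L : Type v) (T : Type w)
    [LieRing L] [LieAlgebra F L] [LieRing T] [LieAlgebra F T]
    (h : L → L → T) : Prop where
  isLiePairing : IsLiePairing F h
  universal : ∀ (Q : Type (max u v w)) [LieRing Q] [LieAlgebra F Q]
      (h' : L → L → Q), IsLiePairing F h' →
        ∃! ζ : T →ₗ⁅F⁆ Q, ∀ x y : L, ζ (h x y) = h' x y

/-! ### ULift of Lie algebras -/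

instance ULift.instLieRing {L : Type u} [LieRing L] : LieRing (ULift.{x} L) :=
  { ULift.addCommGroup with
    bracket := fun a b => ULift.up ⁅a.down, b.down⁆
    add_lie := fun a b c => by apply ULift.ext; exact add_lie _ _ _
    lie_add := fun a b c => by apply ULift.ext; exact lie_add _ _ _
    lie_self := fun a => by apply ULift.ext; exact lie_self _
    leibniz_lie := fun a b c => by apply ULift.ext; exact leibniz_lie _ _ _ }

@[simp] lemma ULift.down_lie {L : Type u} [LieRing L] (a b : ULift.{x} L) :
    (⁅a, b⁆ : ULift L).down = ⁅a.down, b.down⁆ := rfl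

instance ULift.instLieAlgebra {K : Type*} [CommRing K] {L : Type u} [LieRing L]
    [LieAlgebra K L] : LieAlgebra K (ULift.{x} L) :=
  { ULift.module' with
    lie_smul := fun c a b => by apply ULift.ext; simp [ULift.smul_def] }

/-- `ULift.up` as a Lie algebra homomorphism. -/
def LieHom.ulift {K : Type*} [CommRing K] {L : Type u} [LieRing L] [LieAlgebra K L] :
    L →ₗ⁅K⁆ ULift.{x} L where
  toFun := ULift.up
  map_add' _ _ := rfl
  map_smul' _ _ := rfl
  map_lie' := rfl

/-- `ULift.down` as a Lie algebra homomorphism. -/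
def LieHom.udown {K : Type*} [CommRing K] {L : Type u} [LieRing L] [LieAlgebra K L] :
    ULift.{x} L →ₗ⁅K⁆ L where
  toFun := ULift.down
  map_add' _ _ := rfl
  map_smul' _ _ := rfl
  map_lie' := rfl

/-! ### Lie pairings compose with Lie algebra homomorphisms -/

section PairingComp

variable {F : Type u} [Field F] {L : Type v} {H : Type w} {H' : Type x}
  [LieRing L] [LieAlgebra F L] [LieRing H] [LieAlgebra F H]
  [LieRing H'] [LieAlgebra F H']

lemma IsLiePairing.map {ρ : L → L → H} (hp : IsLiePairing F ρ) (f : H →ₗ⁅F⁆ H') :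
    IsLiePairing F (fun a b => f (ρ a b)) where
  add_left l l' k := by rw [hp.add_left, map_add f]
  add_right l k k' := by rw [hp.add_right, map_add f]
  smul_left c l k := by rw [hp.smul_left, map_smul f]
  smul_right c l k := by rw [hp.smul_right, map_smul f]
  bracket_left l l' s := by rw [hp.bracket_left, map_sub f]
  bracket_right l s s' := by rw [hp.bracket_right, map_sub f]
  bracket_bracket l s l' s' := by rw [hp.bracket_bracket, map_neg f, f.map_lie]

lemma IsLiePairing.of_comp_injective {ρ : L → L → H} (f : H →ₗ⁅F⁆ H')
    (hf : Function.Injective f) (hp : IsLiePairing F (fun a b => f (ρ a b))) :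
    IsLiePairing F ρ where
  add_left l l' k := hf (by simpa [f.map_add] using hp.add_left l l' k)
  add_right l k k' := hf (by simpa [f.map_add] using hp.add_right l k k')
  smul_left c l k := hf (by simpa [f.map_smul] using hp.smul_left c l k)
  smul_right c l k := hf (by simpa [f.map_smul] using hp.smul_right c l k)
  bracket_left l l' s := hf (by simpa [f.map_sub] using hp.bracket_left l l' s)
  bracket_right l s s' := hf (by simpa [f.map_sub] using hp.bracket_right l s s')
  bracket_bracket l s l' s' := hf (by
    simpa [f.map_neg, f.map_lie] using hp.bracket_bracket l s l' s')

end PairingComp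

/-! ### A universal pairing spans its target -/

lemma IsUniversalLiePairing.span_eq_top {K : Type u} [Field K] {L : Type v} {T : Type w}
    [LieRing L] [LieAlgebra K L] [LieRing T] [LieAlgebra K T]
    {h : L → L → T} (hh : IsUniversalLiePairing K L T h) :
    Submodule.span K {z : T | ∃ a b : L, z = h a b} = ⊤ := by
  set s : Set T := {z : T | ∃ a b : L, z = h a b} with hs
  -- the span is closed under the bracket
  have hclosed : ∀ a ∈ Submodule.span K s, ∀ b ∈ Submodule.span K s,
      ⁅a, b⁆ ∈ Submodule.span K s := by
    intro a ha
    refine Submodule.span_induction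
      (p := fun a _ => ∀ b ∈ Submodule.span K s, ⁅a, b⁆ ∈ Submodule.span K s)
      ?_ ?_ ?_ ?_ ha
    · rintro a ⟨x, y, rfl⟩ b hb
      refine Submodule.span_induction (p := fun b _ => ⁅h x y, b⁆ ∈ Submodule.span K s)
        ?_ ?_ ?_ ?_ hb
      · rintro b ⟨x', y', rfl⟩
        have := hh.isLiePairing.bracket_bracket y x x' y'
        have h2 : ⁅h x y, h x' y'⁆ = -h ⁅y, x⁆ ⁅x', y'⁆ := by rw [this, neg_neg]
        rw [h2]
        exact Submodule.neg_mem _ (Submodule.subset_span ⟨_, _, rfl⟩)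
      · simp
      · intro b₁ b₂ _ _ h1 h2; rw [lie_add]; exact Submodule.add_mem _ h1 h2
      · intro t b _ h1; rw [lie_smul]; exact Submodule.smul_mem _ _ h1
    · intro b _; simp
    · intro a₁ a₂ _ _ h1 h2 b hb; rw [add_lie]
      exact Submodule.add_mem _ (h1 b hb) (h2 b hb)
    · intro t a _ h1 b hb; rw [smul_lie]
      exact Submodule.smul_mem _ _ (h1 b hb)
  set SA : LieSubalgebra K T :=
    { Submodule.span K s with lie_mem' := fun {a b} ha hb => hclosed a ha b hb } with hSA
  let h₁ : L → L → ULift.{max u v} SA := fun a b =>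
    ULift.up ⟨h a b, Submodule.subset_span ⟨a, b, rfl⟩⟩
  have hinj : Function.Injective (SA.incl.comp (LieHom.udown (K := K) (L := SA))) := by
    intro a b hab
    apply ULift.ext
    exact Subtype.ext hab
  have hp₁ : IsLiePairing K h₁ := by
    refine IsLiePairing.of_comp_injective (SA.incl.comp LieHom.udown) hinj ?_
    exact hh.isLiePairing
  obtain ⟨ζ, hζ, -⟩ := hh.universal (ULift.{max u v} SA) h₁ hp₁
  set up : T →ₗ⁅K⁆ ULift.{max u v} T := LieHom.ulift (K := K) (L := T) with hup
  have hp₂ : IsLiePairing K (fun a b : L => up (h a b)) := hh.isLiePairing.map up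
  obtain ⟨ζ₂, -, huniq⟩ := hh.universal (ULift.{max u v} T)
    (fun a b => up (h a b)) hp₂
  set f₁ : T →ₗ⁅K⁆ ULift.{max u v} T :=
    up.comp (SA.incl.comp ((LieHom.udown (K := K) (L := SA)).comp ζ)) with hf₁
  have e1 : ∀ a b : L, f₁ (h a b) = up (h a b) := by
    intro a b
    have : ζ (h a b) = h₁ a b := hζ a b
    simp only [hf₁, LieHom.comp_apply, this]
    rfl
  have e2 : ∀ a b : L, up (h a b) = up (h a b) := fun _ _ => rfl
  have hfu : f₁ = up := (huniq f₁ e1).trans (huniq up e2).symm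
  rw [eq_top_iff]
  rintro t -
  have ht : ((ζ t).down : T) = t := by
    have := congrArg (fun g : T →ₗ⁅K⁆ ULift.{max u v} T => (g t).down) hfu
    simpa [hf₁, hup, LieHom.ulift, LieHom.udown] using this
  exact ht ▸ ((ζ t).down).2

/-! ### Central extension by a 2-cocycle -/

section CentralExt

variable (K : Type*) [Field K] (L : Type*) [LieRing L] [LieAlgebra K L]
  (M : Type*) [AddCommGroup M] [Module K M]

/-- A bilinear alternating map satisfying the cocycle identity. -/
structure LieCocycle where
  toBilin : L →ₗ[K] L →ₗ[K] M
  map_self : ∀ a : L, toBilin a a = 0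
  leib : ∀ a b c : L, toBilin ⁅a, b⁆ c = toBilin a ⁅b, c⁆ - toBilin b ⁅a, c⁆

variable {K L M}

/-- The central extension of `L` by `M` along a cocycle. -/
def CentralExt (_c : LieCocycle K L M) : Type _ := L × M

namespace CentralExt

variable (c : LieCocycle K L M)

instance : AddCommGroup (CentralExt c) := inferInstanceAs (AddCommGroup (L × M))
instance : Module K (CentralExt c) := inferInstanceAs (Module K (L × M))

instance : LieRing (CentralExt c) :=
  { (inferInstance : AddCommGroup (L × M)) with
    bracket := fun a b => (⁅a.1, b.1⁆, c.toBilin a.1 b.1)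
    add_lie := fun a b d => by
      refine Prod.ext (add_lie a.1 b.1 d.1) ?_
      show c.toBilin (a.1 + b.1) d.1 = c.toBilin a.1 d.1 + c.toBilin b.1 d.1
      rw [map_add, LinearMap.add_apply]
    lie_add := fun a b d => by
      refine Prod.ext (lie_add a.1 b.1 d.1) ?_
      show c.toBilin a.1 (b.1 + d.1) = c.toBilin a.1 b.1 + c.toBilin a.1 d.1
      rw [map_add]
    lie_self := fun a => by
      refine Prod.ext (lie_self a.1) ?_
      show c.toBilin a.1 a.1 = 0
      exact c.map_self a.1
    leibniz_lie := fun a b d => by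
      refine Prod.ext (leibniz_lie a.1 b.1 d.1) ?_
      show c.toBilin a.1 ⁅b.1, d.1⁆ = c.toBilin ⁅a.1, b.1⁆ d.1 + c.toBilin b.1 ⁅a.1, d.1⁆
      rw [c.leib a.1 b.1 d.1]; abel }

instance : LieAlgebra K (CentralExt c) :=
  { (inferInstance : Module K (L × M)) with
    lie_smul := fun t a b => by
      refine Prod.ext (lie_smul t a.1 b.1) ?_
      show c.toBilin a.1 (t • b.1) = t • c.toBilin a.1 b.1
      simp }

@[simp] lemma lie_fst (a b : CentralExt c) : (⁅a, b⁆ : CentralExt c).1 = ⁅a.1, b.1⁆ := rfl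
@[simp] lemma lie_snd (a b : CentralExt c) :
    (⁅a, b⁆ : CentralExt c).2 = c.toBilin a.1 b.1 := rfl

/-- First projection as a Lie algebra homomorphism. -/
def fstHom : CentralExt c →ₗ⁅K⁆ L where
  toFun a := a.1
  map_add' _ _ := rfl
  map_smul' _ _ := rfl
  map_lie' := rfl

/-- Second projection as a linear map. -/
def sndLin : CentralExt c →ₗ[K] M where
  toFun a := a.2
  map_add' _ _ := rfl
  map_smul' _ _ := rfl

@[simp] lemma fstHom_apply (a : CentralExt c) : fstHom c a = a.1 := rfl
@[simp] lemma sndLin_apply (a : CentralExt c) : sndLin c a = a.2 := rfl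

end CentralExt

end CentralExt

theorem freeLieAlgebra_exteriorSquare_iso_derived (K : Type u) [Field K]
    (X : Type v) (T : Type w) [LieRing T] [LieAlgebra K T]
    (h : FreeLieAlgebra K X → FreeLieAlgebra K X → T)
    (hh : IsUniversalLiePairing K (FreeLieAlgebra K X) T h)
    (sq : LieIdeal K T)
    (hsq : (sq : Submodule K T) =
      Submodule.span K {z : T | ∃ a : FreeLieAlgebra K X, z = h a a})
    (κ' : (T ⧸ sq) →ₗ⁅K⁆ FreeLieAlgebra K X)
    (hκ' : ∀ x y : FreeLieAlgebra K X,
      κ' (LieSubmodule.Quotient.mk (N := sq) (h x y)) = ⁅x, y⁆) :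
    Function.Injective κ' ∧
      Set.range κ' =
        (⁅(⊤ : LieIdeal K (FreeLieAlgebra K X)),
          (⊤ : LieIdeal K (FreeLieAlgebra K X))⁆ :
            LieIdeal K (FreeLieAlgebra K X)) := by
  classical
  set q : T →ₗ[K] T ⧸ sq := ((sq : Submodule K T).mkQ : T →ₗ[K] T ⧸ sq) with hq
  have hqmk : ∀ t : T, q t = LieSubmodule.Quotient.mk (N := sq) t := fun _ => rfl
  set s : Set T := {z : T | ∃ a b : FreeLieAlgebra K X, z = h a b} with hs
  have hspanT : Submodule.span K s = ⊤ := hh.span_eq_top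
  -- the quotient is spanned by the images of the `h a b`
  have hqsurj : Function.Surjective q := Submodule.mkQ_surjective _
  have hspanM : Submodule.span K (⇑q '' s) = (⊤ : Submodule K (T ⧸ sq)) := by
    rw [← Submodule.map_span q s]
    rw [hspanT, Submodule.map_top, LinearMap.range_eq_top]
    exact hqsurj
  -- elements `h a a` die in the quotient
  have hdiag : ∀ a : FreeLieAlgebra K X, q (h a a) = 0 := by
    intro a
    rw [hqmk, LieSubmodule.Quotient.mk_eq_zero']
    have : h a a ∈ (sq : Submodule K T) := by
      rw [hsq]; exact Submodule.subset_span ⟨a, rfl⟩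
    rw [LieIdeal.toLieSubalgebra_toSubmodule, LieSubmodule.mem_toSubmodule] at this
    exact this
  -- the cocycle
  set ρ : FreeLieAlgebra K X →ₗ[K] FreeLieAlgebra K X →ₗ[K] T ⧸ sq := LinearMap.mk₂ K (fun a b => q (h a b))
    (fun a a' b => by
      show q (h (a + a') b) = q (h a b) + q (h a' b)
      rw [hh.isLiePairing.add_left, map_add])
    (fun t a b => by
      show q (h (t • a) b) = t • q (h a b)
      rw [hh.isLiePairing.smul_left, map_smul])
    (fun a b b' => by
      show q (h a (b + b')) = q (h a b) + q (h a b')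
      rw [hh.isLiePairing.add_right, map_add])
    (fun t a b => by
      show q (h a (t • b)) = t • q (h a b)
      rw [hh.isLiePairing.smul_right, map_smul]) with hρ
  have hρ_apply : ∀ a b : FreeLieAlgebra K X, ρ a b = q (h a b) := fun _ _ => rfl
  set c : LieCocycle K (FreeLieAlgebra K X) (T ⧸ sq) :=
    { toBilin := ρ
      map_self := fun a => hdiag a
      leib := fun a b d => by
        simp only [hρ_apply, hh.isLiePairing.bracket_left, map_sub] } with hc
  -- lift from the free Lie algebra into the central extension
  set φ : FreeLieAlgebra K X →ₗ⁅K⁆ CentralExt c :=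
    FreeLieAlgebra.lift K
      (fun x => ((FreeLieAlgebra.of K x, 0) : FreeLieAlgebra K X × (T ⧸ sq))) with hφ
  have hφ₁ : (CentralExt.fstHom c).comp φ = LieHom.id := by
    apply FreeLieAlgebra.hom_ext
    intro x
    simp only [LieHom.comp_apply, hφ, FreeLieAlgebra.lift_of_apply, LieHom.id_apply]
    exact congrArg (CentralExt.fstHom c) (FreeLieAlgebra.lift_of_apply (R := K) (L := CentralExt c) _ x)
  have hφ₁' : ∀ a : FreeLieAlgebra K X, (φ a).1 = a := fun a => by
    have := LieHom.congr_fun hφ₁ a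
    simpa using this
  set ψ : FreeLieAlgebra K X →ₗ[K] T ⧸ sq := (CentralExt.sndLin c).comp φ.toLinearMap with hψ
  have hψlie : ∀ a b : FreeLieAlgebra K X, ψ ⁅a, b⁆ = q (h a b) := by
    intro a b
    have h1 : φ ⁅a, b⁆ = ⁅φ a, φ b⁆ := φ.map_lie a b
    simp only [hψ, LinearMap.comp_apply, LieHom.coe_toLinearMap, h1,
      CentralExt.sndLin_apply, CentralExt.lie_snd, hφ₁']
    show (φ ⁅a, b⁆).2 = _
    rw [h1]
    show c.toBilin (φ a).1 (φ b).1 = _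
    rw [hφ₁', hφ₁']
    exact hρ_apply a b
  -- left inverse on the quotient
  have hleft : ψ ∘ₗ κ'.toLinearMap = LinearMap.id := by
    apply LinearMap.ext_on hspanM
    rintro z ⟨t, ⟨a, b, rfl⟩, rfl⟩
    simp only [LinearMap.comp_apply, LieHom.coe_toLinearMap, LinearMap.id_apply]
    rw [hqmk, hκ' a b, hψlie a b, hqmk]
  have hinj : Function.Injective κ' := by
    have hli : Function.LeftInverse ψ κ' := fun m => LinearMap.congr_fun hleft m
    exact hli.injective
  refine ⟨hinj, ?_⟩
  -- range computation
  have hmap : Submodule.map κ'.toLinearMap (Submodule.span K (⇑q '' s)) =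
      Submodule.span K (⇑κ' '' (⇑q '' s)) := Submodule.map_span _ _
  have himg : ⇑κ' '' (⇑q '' s) =
      {m : FreeLieAlgebra K X | ∃ x ∈ (⊤ : LieIdeal K (FreeLieAlgebra K X)),
        ∃ n ∈ (⊤ : LieIdeal K (FreeLieAlgebra K X)), ⁅x, n⁆ = m} := by
    ext m
    constructor
    · rintro ⟨t', ⟨t, ⟨a, b, rfl⟩, rfl⟩, rfl⟩
      exact ⟨a, trivial, b, trivial, by rw [← hκ' a b]; rfl⟩
    · rintro ⟨a, -, b, -, rfl⟩
      exact ⟨q (h a b), ⟨h a b, ⟨a, b, rfl⟩, rfl⟩, by rw [hqmk, hκ' a b]⟩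
  ext m
  constructor
  · rintro ⟨n, rfl⟩
    have : κ' n ∈ Submodule.map κ'.toLinearMap (Submodule.span K (⇑q '' s)) :=
      ⟨n, by rw [hspanM]; trivial, rfl⟩
    rw [hmap, himg] at this
    rw [SetLike.mem_coe, ← LieSubmodule.mem_toSubmodule,
      LieSubmodule.lieIdeal_oper_eq_linear_span']
    exact this
  · intro hm
    rw [SetLike.mem_coe, ← LieSubmodule.mem_toSubmodule,
      LieSubmodule.lieIdeal_oper_eq_linear_span', ← himg, ← hmap] at hm
    obtain ⟨n, -, rfl⟩ := hm
    exact ⟨n, rfl⟩
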